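/- Let 0 ≤ τ₁ ≤ τ₂, and let (X_i)_{i≥1} and (Y_i)_{i≥1} be ℕ-valued random variables on a probability space, all mutually independent, with X_i Poisson-distributed with parameter τ₁ p_i and Y_i Poisson-distributed with parameter (τ₂ − τ₁) p_i. Set u_i = 1{X_i + Y_i is odd} − 1{X_i is odd}. Then the series Σ_{i≥1} (u_i − E u_i) converges a.s. and in L², and E [ ( Σ_{i≥1} (u_i − E u_i) )² ] ≤ 5 Σ_{i≥1} (1 − e^{−(τ₂ − τ₁) p_i}). -/

import Mathlib

open Filter Topology Real MeasureTheory ProbabilityTheory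
open scoped ENNReal NNReal

lemma my_lint_sq {Ω : Type*} [MeasurableSpace Ω] (P : Measure Ω)
    {g : Ω → ℝ} (hgi : Integrable (fun ω => g ω ^ 2) P) :
    ∫⁻ ω, ENNReal.ofReal (g ω ^ 2) ∂P = ENNReal.ofReal (∫ ω, g ω ^ 2 ∂P) :=
  (ofReal_integral_eq_lintegral_ofReal hgi (ae_of_all _ fun ω => sq_nonneg _)).symm

lemma my_eLpNorm_two_le {Ω : Type*} [MeasurableSpace Ω] (P : Measure Ω)
    {g : Ω → ℝ} (hgi : Integrable (fun ω => g ω ^ 2) P)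
    {B : ℝ} (hB : ∫ ω, g ω ^ 2 ∂P ≤ B) :
    eLpNorm g 2 P ≤ ENNReal.ofReal (Real.sqrt B) := by
  have h2 : ((2 : ℝ≥0∞)).toReal = (2 : ℝ) := by norm_num
  rw [eLpNorm_eq_lintegral_rpow_enorm_toReal (by norm_num) (by norm_num), h2]
  have hpt : ∀ ω, ‖g ω‖ₑ ^ (2 : ℝ) = ENNReal.ofReal (g ω ^ 2) := by
    intro ω
    rw [← ofReal_norm,
      ENNReal.ofReal_rpow_of_nonneg (norm_nonneg _) (by norm_num)]
    congr 1
    rw [Real.norm_eq_abs, show ((2:ℝ)) = ((2:ℕ):ℝ) by norm_num, Real.rpow_natCast, sq_abs]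
  rw [lintegral_congr hpt, my_lint_sq P hgi]
  have h0 : (0:ℝ) ≤ ∫ ω, g ω ^ 2 ∂P := integral_nonneg fun ω => sq_nonneg _
  rw [ENNReal.ofReal_rpow_of_nonneg h0 (by norm_num), ← Real.sqrt_eq_rpow]
  exact ENNReal.ofReal_le_ofReal (Real.sqrt_le_sqrt hB)

theorem odd_occupancy_increment_variance_bound
    {Ω : Type*} [MeasurableSpace Ω] (P : Measure Ω) [IsProbabilityMeasure P]
    (p : ℕ → ℝ) (hp_pos : ∀ i, 0 < p i) (hp_sum : ∑' i, p i = 1)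
    (τ₁ τ₂ : ℝ) (hτ₁ : 0 ≤ τ₁) (hτ : τ₁ ≤ τ₂)
    (X Y : ℕ → Ω → ℕ) (hX_meas : ∀ i, Measurable (X i)) (hY_meas : ∀ i, Measurable (Y i))
    (h_indep : iIndepFun (Sum.elim X Y) P)
    (hX : ∀ i, ∀ k : ℕ, (P {ω | X i ω = k}).toReal
      = Real.exp (-(τ₁ * p i)) * (τ₁ * p i) ^ k / k.factorial)
    (hY : ∀ i, ∀ k : ℕ, (P {ω | Y i ω = k}).toReal
      = Real.exp (-((τ₂ - τ₁) * p i)) * ((τ₂ - τ₁) * p i) ^ k / k.factorial)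
    (u : ℕ → Ω → ℝ)
    (hu : ∀ i ω, u i ω = (if Odd (X i ω + Y i ω) then (1 : ℝ) else 0)
      - (if Odd (X i ω) then (1 : ℝ) else 0))
    (S : Ω → ℝ) (hS : ∀ ω, S ω = ∑' i, (u i ω - ∫ ω', u i ω' ∂P)) :
    (∀ᵐ ω ∂P, Summable fun i => u i ω - ∫ ω', u i ω' ∂P) ∧
    Tendsto (fun N => eLpNorm
        (fun ω => (∑ i ∈ Finset.range N, (u i ω - ∫ ω', u i ω' ∂P)) - S ω) 2 P)
      atTop (𝓝 0) ∧
    (∫ ω, (S ω) ^ 2 ∂P) ≤ 5 * ∑' i, (1 - Real.exp (-((τ₂ - τ₁) * p i))) := by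
  classical
  set δ : ℝ := τ₂ - τ₁ with hδ_def
  have hδ : 0 ≤ δ := sub_nonneg.mpr hτ
  set b : ℕ → ℝ := fun i => 1 - Real.exp (-((τ₂ - τ₁) * p i)) with hb_def
  set c : ℕ → ℝ := fun i => ∫ ω', u i ω' ∂P with hc_def
  set v : ℕ → Ω → ℝ := fun i ω => u i ω - ∫ ω', u i ω' ∂P with hv_def
  -- basic facts about b
  have hb0 : ∀ i, 0 ≤ b i := by
    intro i
    have : Real.exp (-((τ₂ - τ₁) * p i)) ≤ 1 :=
      Real.exp_le_one_iff.mpr (by nlinarith [(hp_pos i).le])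
    simp only [hb_def]; linarith
  have hb1 : ∀ i, b i ≤ 1 := by
    intro i
    have := Real.exp_pos (-((τ₂ - τ₁) * p i))
    simp only [hb_def]; linarith
  have hb_le : ∀ i, b i ≤ δ * p i := by
    intro i
    have := Real.add_one_le_exp (-((τ₂ - τ₁) * p i))
    simp only [hb_def, hδ_def]; linarith
  have hp_summable : Summable p := by
    by_contra h
    rw [tsum_eq_zero_of_not_summable h] at hp_sum
    norm_num at hp_sum
  have hb_sum : Summable b :=
    Summable.of_nonneg_of_le hb0 hb_le (hp_summable.mul_left δ)
  set B : ℝ := ∑' i, b i with hB_def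
  -- measurability of u
  have h_u_eq : ∀ i, u i = (fun q : ℕ × ℕ =>
      (if Odd (q.1 + q.2) then (1 : ℝ) else 0) - (if Odd q.1 then (1 : ℝ) else 0))
        ∘ (fun ω => (X i ω, Y i ω)) := by
    intro i; funext ω; simpa using hu i ω
  have hg_meas : Measurable (fun q : ℕ × ℕ =>
      (if Odd (q.1 + q.2) then (1 : ℝ) else 0) - (if Odd q.1 then (1 : ℝ) else 0)) :=
    measurable_of_countable _
  have h_meas_u : ∀ i, Measurable (u i) := by
    intro i
    rw [h_u_eq i]
    exact hg_meas.comp ((hX_meas i).prodMk (hY_meas i))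
  have h_meas_v : ∀ i, Measurable (v i) := fun i => (h_meas_u i).sub measurable_const
  -- pointwise bounds
  have hub : ∀ i ω, |u i ω| ≤ (if Odd (Y i ω) then (1:ℝ) else 0) := by
    intro i ω
    rw [hu i ω]
    by_cases hY' : Odd (Y i ω)
    · simp only [hY', if_true]
      split_ifs <;> norm_num
    · have hEven : Even (Y i ω) := Nat.not_odd_iff_even.mp hY'
      have : Odd (X i ω + Y i ω) ↔ Odd (X i ω) := by
        rw [Nat.odd_add]
        exact ⟨fun h => h.mpr hEven, fun h => ⟨fun _ => hEven, fun _ => h⟩⟩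
      simp only [hY', if_false, this]
      split_ifs <;> norm_num
  have hub2 : ∀ i ω, (u i ω) ^ 2 ≤ (if Odd (Y i ω) then (1:ℝ) else 0) := by
    intro i ω
    have h1 := hub i ω
    have h2 : (0:ℝ) ≤ |u i ω| := abs_nonneg _
    by_cases hY' : Odd (Y i ω) <;> simp only [hY', if_true, if_false] at h1 ⊢ <;>
      nlinarith [sq_abs (u i ω)]
  have hub1 : ∀ i ω, |u i ω| ≤ 1 := by
    intro i ω
    refine (hub i ω).trans ?_
    split_ifs <;> norm_num
  -- the indicator-type function and its integral
  have hA_meas : ∀ i, MeasurableSet {ω | Odd (Y i ω)} := by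
    intro i
    have : MeasurableSet (Y i ⁻¹' {n | Odd n}) := hY_meas i trivial
    exact this
  have h_ind_int : ∀ i, Integrable (fun ω => if Odd (Y i ω) then (1:ℝ) else 0) P := by
    intro i
    refine (integrable_const (1:ℝ)).mono'
      ((measurable_const.ite (hA_meas i) measurable_const).aestronglyMeasurable)
      (ae_of_all _ fun ω => ?_)
    rw [Real.norm_eq_abs]
    split_ifs <;> norm_num
  have h_ind_eq : ∀ i, ∫ ω, (if Odd (Y i ω) then (1:ℝ) else 0) ∂P
      = (P {ω | Odd (Y i ω)}).toReal := by
    intro i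
    have : (fun ω => if Odd (Y i ω) then (1:ℝ) else 0)
        = Set.indicator {ω | Odd (Y i ω)} (fun _ => (1:ℝ)) := by
      funext ω; simp [Set.indicator_apply, Set.mem_setOf_eq]
    rw [this, integral_indicator_const (1:ℝ) (hA_meas i)]
    simp
    rfl
  have hPA : ∀ i, (P {ω | Odd (Y i ω)}).toReal ≤ b i := by
    intro i
    have hmeas0 : MeasurableSet {ω | Y i ω = 0} := by
      have : MeasurableSet (Y i ⁻¹' {0}) := hY_meas i trivial
      exact this
    have hsub : {ω | Odd (Y i ω)} ⊆ {ω | Y i ω = 0}ᶜ := by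
      intro ω hω h0
      simp only [Set.mem_setOf_eq] at hω h0
      rw [h0] at hω
      simp [Nat.odd_iff] at hω
    have h0 : (P {ω | Y i ω = 0}).toReal = Real.exp (-((τ₂ - τ₁) * p i)) := by
      simpa using hY i 0
    calc (P {ω | Odd (Y i ω)}).toReal
        ≤ (P ({ω | Y i ω = 0}ᶜ)).toReal :=
          ENNReal.toReal_mono (measure_ne_top _ _) (measure_mono hsub)
      _ = 1 - Real.exp (-((τ₂ - τ₁) * p i)) := by
          rw [prob_compl_eq_one_sub hmeas0,
            ENNReal.toReal_sub_of_le prob_le_one ENNReal.one_ne_top, h0]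
          simp
      _ = b i := rfl
  -- integrability
  have h_int_u : ∀ i, Integrable (u i) P := by
    intro i
    exact (integrable_const (1:ℝ)).mono' (h_meas_u i).aestronglyMeasurable
      (ae_of_all _ fun ω => by rw [Real.norm_eq_abs]; exact hub1 i ω)
  have h_int_u2 : ∀ i, Integrable (fun ω => (u i ω) ^ 2) P := by
    intro i
    refine (integrable_const (1:ℝ)).mono' ((h_meas_u i).pow_const 2).aestronglyMeasurable
      (ae_of_all _ fun ω => ?_)
    rw [Real.norm_eq_abs, abs_of_nonneg (sq_nonneg _)]
    nlinarith [hub1 i ω, abs_nonneg (u i ω), sq_abs (u i ω)]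
  have h_int_v : ∀ i, Integrable (v i) P := fun i => (h_int_u i).sub (integrable_const _)
  have hEu2 : ∀ i, ∫ ω, (u i ω) ^ 2 ∂P ≤ b i := by
    intro i
    calc ∫ ω, (u i ω) ^ 2 ∂P ≤ ∫ ω, (if Odd (Y i ω) then (1:ℝ) else 0) ∂P :=
          integral_mono (h_int_u2 i) (h_ind_int i) (hub2 i)
      _ = (P {ω | Odd (Y i ω)}).toReal := h_ind_eq i
      _ ≤ b i := hPA i
  have hc_bound : ∀ i, |c i| ≤ b i := by
    intro i
    calc |c i| ≤ ∫ ω, |u i ω| ∂P := by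
          simpa [Real.norm_eq_abs] using norm_integral_le_integral_norm (μ := P) (u i)
      _ ≤ ∫ ω, (if Odd (Y i ω) then (1:ℝ) else 0) ∂P :=
          integral_mono (h_int_u i).abs (h_ind_int i) (hub i)
      _ = (P {ω | Odd (Y i ω)}).toReal := h_ind_eq i
      _ ≤ b i := hPA i
  have hEv : ∀ i, ∫ ω, v i ω ∂P = 0 := by
    intro i
    simp only [hv_def]
    rw [integral_sub (h_int_u i) (integrable_const _), integral_const]
    simp [hc_def]
  have hvb : ∀ i ω, |v i ω| ≤ 2 := by
    intro i ω
    have h1 := hub1 i ω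
    have h2 := (hc_bound i).trans (hb1 i)
    calc |v i ω| = |u i ω - c i| := rfl
      _ ≤ |u i ω| + |c i| := abs_sub _ _
      _ ≤ 2 := by linarith
  have h_int_v2 : ∀ i, Integrable (fun ω => (v i ω) ^ 2) P := by
    intro i
    refine (integrable_const (4:ℝ)).mono' ((h_meas_v i).pow_const 2).aestronglyMeasurable
      (ae_of_all _ fun ω => ?_)
    rw [Real.norm_eq_abs, abs_of_nonneg (sq_nonneg _)]
    nlinarith [hvb i ω, abs_nonneg (v i ω), sq_abs (v i ω)]
  have hvar : ∀ i, ∫ ω, (v i ω) ^ 2 ∂P ≤ b i := by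
    intro i
    have hexp : ∀ ω, (v i ω) ^ 2 = ((u i ω) ^ 2 - (2 * c i) * u i ω) + (c i) ^ 2 := by
      intro ω
      show (u i ω - c i) ^ 2 = _
      ring
    have hint1 : Integrable (fun ω => (u i ω) ^ 2 - (2 * c i) * u i ω) P :=
      (h_int_u2 i).sub ((h_int_u i).const_mul _)
    calc ∫ ω, (v i ω) ^ 2 ∂P
        = ∫ ω, (((u i ω) ^ 2 - (2 * c i) * u i ω) + (c i) ^ 2) ∂P := by
          exact integral_congr_ae (ae_of_all _ hexp)
      _ = (∫ ω, (u i ω) ^ 2 ∂P) - 2 * c i * c i + (c i) ^ 2 := by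
          rw [integral_add hint1 (integrable_const _), integral_sub (h_int_u2 i)
            ((h_int_u i).const_mul _), integral_const_mul, integral_const]
          simp [hc_def]
      _ = (∫ ω, (u i ω) ^ 2 ∂P) - (c i) ^ 2 := by ring
      _ ≤ b i := by nlinarith [hEu2 i, sq_nonneg (c i)]
  -- independence
  have hse : ∀ k : ℕ ⊕ ℕ, Measurable (Sum.elim X Y k) := by
    rintro (i | i)
    exacts [hX_meas i, hY_meas i]
  have h_indep_u : ∀ i j, i ≠ j → IndepFun (u i) (u j) P := by
    intro i j hij
    have hpair : IndepFun (fun ω => (X i ω, Y i ω)) (fun ω => (X j ω, Y j ω)) P := by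
      have := h_indep.indepFun_prodMk_prodMk hse (Sum.inl i) (Sum.inr i)
        (Sum.inl j) (Sum.inr j) (by simp [hij]) (by simp) (by simp) (by simp [hij])
      simpa using this
    rw [h_u_eq i, h_u_eq j]
    exact hpair.comp hg_meas hg_meas
  have h_indep_v : ∀ i j, i ≠ j → IndepFun (v i) (v j) P := by
    intro i j hij
    have h1 : v i = (fun x => x - c i) ∘ u i := rfl
    have h2 : v j = (fun x => x - c j) ∘ u j := rfl
    rw [h1, h2]
    exact (h_indep_u i j hij).comp (measurable_id.sub measurable_const)
      (measurable_id.sub measurable_const)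
  have h_int_vv : ∀ i j, Integrable (fun ω => v i ω * v j ω) P := by
    intro i j
    refine (integrable_const (4:ℝ)).mono'
      (((h_meas_v i).mul (h_meas_v j)).aestronglyMeasurable)
      (ae_of_all _ fun ω => ?_)
    rw [Real.norm_eq_abs, abs_mul]
    nlinarith [hvb i ω, hvb j ω, abs_nonneg (v i ω), abs_nonneg (v j ω)]
  have h_cross : ∀ i j, i ≠ j → ∫ ω, v i ω * v j ω ∂P = 0 := by
    intro i j hij
    have := (h_indep_v i j hij).integral_mul_eq_mul_integral (h_int_v i).aestronglyMeasurable (h_int_v j).aestronglyMeasurable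
    calc ∫ ω, v i ω * v j ω ∂P = ∫ ω, (v i * v j) ω ∂P := rfl
      _ = (∫ ω, v i ω ∂P) * ∫ ω, v j ω ∂P := this
      _ = 0 := by rw [hEv i, hEv j]; ring
  -- the key finite-sum second moment bound
  have hkey : ∀ s : Finset ℕ, ∫ ω, (∑ i ∈ s, v i ω) ^ 2 ∂P ≤ ∑ i ∈ s, b i := by
    intro s
    have hexp : ∀ ω, (∑ i ∈ s, v i ω) ^ 2 = ∑ i ∈ s, ∑ j ∈ s, v i ω * v j ω := by
      intro ω
      rw [sq, Finset.sum_mul_sum]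
    calc ∫ ω, (∑ i ∈ s, v i ω) ^ 2 ∂P
        = ∫ ω, ∑ i ∈ s, ∑ j ∈ s, v i ω * v j ω ∂P := integral_congr_ae (ae_of_all _ hexp)
      _ = ∑ i ∈ s, ∑ j ∈ s, ∫ ω, v i ω * v j ω ∂P := by
          rw [integral_finset_sum s fun i _ => integrable_finset_sum s fun j _ => h_int_vv i j]
          exact Finset.sum_congr rfl fun i _ =>
            integral_finset_sum s fun j _ => h_int_vv i j
      _ = ∑ i ∈ s, ∫ ω, v i ω * v i ω ∂P := by
          refine Finset.sum_congr rfl fun i hi => ?_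
          exact Finset.sum_eq_single_of_mem i hi fun j _ hji => h_cross i j (Ne.symm hji)
      _ ≤ ∑ i ∈ s, b i := by
          refine Finset.sum_le_sum fun i _ => ?_
          have : ∫ ω, v i ω * v i ω ∂P = ∫ ω, (v i ω) ^ 2 ∂P := by
            refine integral_congr_ae (ae_of_all _ fun ω => ?_)
            ring
          rw [this]
          exact hvar i
  -- Part 1: a.s. summability
  have h_lint_v : ∀ i, ∫⁻ ω, (‖v i ω‖₊ : ℝ≥0∞) ∂P ≤ ENNReal.ofReal (2 * b i) := by
    intro i
    have h1 : ∫⁻ ω, (‖v i ω‖₊ : ℝ≥0∞) ∂P = ENNReal.ofReal (∫ ω, ‖v i ω‖ ∂P) := by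
      rw [ofReal_integral_eq_lintegral_ofReal (h_int_v i).norm
        (ae_of_all _ fun ω => norm_nonneg _)]
      exact lintegral_congr fun ω => (ofReal_norm _).symm
    rw [h1]
    refine ENNReal.ofReal_le_ofReal ?_
    have h2 : ∫ ω, ‖v i ω‖ ∂P ≤ ∫ ω, (|u i ω| + |c i|) ∂P := by
      refine integral_mono (h_int_v i).norm ((h_int_u i).abs.add (integrable_const _))
        fun ω => ?_
      rw [Real.norm_eq_abs]
      exact abs_sub _ _
    have h3 : ∫ ω, (|u i ω| + |c i|) ∂P ≤ 2 * b i := by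
      rw [integral_add (h_int_u i).abs (integrable_const _), integral_const]
      have h4 : ∫ ω, |u i ω| ∂P ≤ b i := by
        calc ∫ ω, |u i ω| ∂P ≤ ∫ ω, (if Odd (Y i ω) then (1:ℝ) else 0) ∂P :=
              integral_mono (h_int_u i).abs (h_ind_int i) (hub i)
          _ = (P {ω | Odd (Y i ω)}).toReal := h_ind_eq i
          _ ≤ b i := hPA i
      have h5 : P.real Set.univ • |c i| ≤ b i := by
        simp only [probReal_univ, one_smul]
        exact hc_bound i
      linarith
    linarith
  have hmeas_vnn : ∀ i, Measurable fun ω => (‖v i ω‖₊ : ℝ≥0∞) :=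
    fun i => (h_meas_v i).enorm
  have hsum_lint : ∑' i, ∫⁻ ω, (‖v i ω‖₊ : ℝ≥0∞) ∂P ≠ ⊤ := by
    refine ne_top_of_le_ne_top ?_ (ENNReal.tsum_le_tsum h_lint_v)
    rw [← ENNReal.ofReal_tsum_of_nonneg (fun i => mul_nonneg (by norm_num) (hb0 i)) (hb_sum.mul_left 2)]
    exact ENNReal.ofReal_ne_top
  have h_ae_sum : ∀ᵐ ω ∂P, Summable fun i => v i ω := by
    have h1 : ∫⁻ ω, ∑' i, (‖v i ω‖₊ : ℝ≥0∞) ∂P ≠ ⊤ := by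
      rw [lintegral_tsum fun i => (hmeas_vnn i).aemeasurable]
      exact hsum_lint
    filter_upwards [ae_lt_top (Measurable.ennreal_tsum hmeas_vnn) h1] with ω hω
    exact Summable.of_nnnorm (ENNReal.tsum_coe_ne_top_iff_summable.mp hω.ne)
  -- partial sums
  set F : ℕ → Ω → ℝ := fun N ω => ∑ i ∈ Finset.range N, v i ω with hF_def
  have hF_meas : ∀ N, Measurable (F N) :=
    fun N => Finset.measurable_sum _ fun i _ => h_meas_v i
  have h_tend_ae : ∀ᵐ ω ∂P, Tendsto (fun N => F N ω) atTop (𝓝 (S ω)) := by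
    filter_upwards [h_ae_sum] with ω hω
    have := hω.hasSum.tendsto_sum_nat
    rw [hS ω]
    exact this
  -- tail of b
  set tl : ℕ → ℝ := fun N => ∑' i, b (i + N) with htl_def
  have h_tl : ∀ N, ∑ i ∈ Finset.range N, b i + tl N = B :=
    fun N => Summable.sum_add_tsum_nat_add N hb_sum
  have h_tl_nonneg : ∀ N, 0 ≤ tl N :=
    fun N => tsum_nonneg fun i => hb0 _
  have h_range_le : ∀ N, ∑ i ∈ Finset.range N, b i ≤ B :=
    fun N => hb_sum.sum_le_tsum _ (fun i _ => hb0 i)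
  -- second moment of differences of partial sums
  have hdiff : ∀ N M, N ≤ M → ∫ ω, (F N ω - F M ω) ^ 2 ∂P ≤ tl N := by
    intro N M hNM
    have hg_eq : ∀ ω, F N ω - F M ω = -(∑ i ∈ Finset.Ico N M, v i ω) := by
      intro ω
      rw [Finset.sum_Ico_eq_sub _ hNM]
      ring
    have hsq : ∀ ω, (F N ω - F M ω) ^ 2 = (∑ i ∈ Finset.Ico N M, v i ω) ^ 2 := by
      intro ω; rw [hg_eq ω]; ring
    calc ∫ ω, (F N ω - F M ω) ^ 2 ∂P
        = ∫ ω, (∑ i ∈ Finset.Ico N M, v i ω) ^ 2 ∂P := integral_congr_ae (ae_of_all _ hsq)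
      _ ≤ ∑ i ∈ Finset.Ico N M, b i := hkey _
      _ ≤ tl N := by
          rw [Finset.sum_Ico_eq_sub _ hNM]
          have := h_range_le M
          have := h_tl N
          linarith
  have h_int_sum2 : ∀ (s : Finset ℕ), Integrable (fun ω => (∑ i ∈ s, v i ω) ^ 2) P := by
    intro s
    refine (integrable_const ((2 * (s.card : ℝ)) ^ 2)).mono'
      ((Finset.measurable_sum _ fun i _ => h_meas_v i).pow_const 2).aestronglyMeasurable
      (ae_of_all _ fun ω => ?_)
    rw [Real.norm_eq_abs, abs_of_nonneg (sq_nonneg _), ← sq_abs]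
    have habs : |∑ i ∈ s, v i ω| ≤ 2 * s.card := by
      calc |∑ i ∈ s, v i ω| ≤ ∑ i ∈ s, |v i ω| := Finset.abs_sum_le_sum_abs _ _
        _ ≤ ∑ _i ∈ s, (2:ℝ) := Finset.sum_le_sum fun i _ => hvb i ω
        _ = 2 * s.card := by rw [Finset.sum_const, nsmul_eq_mul]; ring
    exact pow_le_pow_left₀ (abs_nonneg _) habs 2
  -- eLpNorm bound for each N
  have hbnd : ∀ N, eLpNorm (fun ω => F N ω - S ω) 2 P ≤ ENNReal.ofReal (Real.sqrt (tl N)) := by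
    intro N
    have hae : ∀ᵐ ω ∂P, Tendsto (fun M => F N ω - F M ω) atTop (𝓝 (F N ω - S ω)) := by
      filter_upwards [h_tend_ae] with ω hω
      exact tendsto_const_nhds.sub hω
    have h1 := Lp.eLpNorm_lim_le_liminf_eLpNorm (μ := P) (p := 2)
      (f := fun M => fun ω => F N ω - F M ω)
      (fun M => ((hF_meas N).sub (hF_meas M)).aestronglyMeasurable)
      (fun ω => F N ω - S ω) hae
    refine h1.trans ?_
    refine Filter.liminf_le_of_frequently_le' ?_
    refine ((eventually_ge_atTop N).mono fun M hM => ?_).frequently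
    have hint2 : Integrable (fun ω => (F N ω - F M ω) ^ 2) P := by
      have : (fun ω => (F N ω - F M ω) ^ 2)
          = fun ω => (∑ i ∈ Finset.Ico N M, v i ω) ^ 2 := by
        funext ω
        rw [Finset.sum_Ico_eq_sub _ hM]
        ring
      rw [this]
      exact h_int_sum2 _
    exact my_eLpNorm_two_le P hint2 (hdiff N M hM)
  -- tail tends to zero
  have h_tl_tend : Tendsto tl atTop (𝓝 0) := by
    have h1 : Tendsto (fun N => B - ∑ i ∈ Finset.range N, b i) atTop (𝓝 (B - B)) :=
      tendsto_const_nhds.sub hb_sum.hasSum.tendsto_sum_nat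
    rw [sub_self] at h1
    refine h1.congr fun N => ?_
    have := h_tl N
    linarith
  have h_upper_tend : Tendsto (fun N => ENNReal.ofReal (Real.sqrt (tl N))) atTop (𝓝 0) := by
    have h1 : Tendsto (fun N => Real.sqrt (tl N)) atTop (𝓝 0) := by
      have := (Real.continuous_sqrt.tendsto 0).comp h_tl_tend
      rw [Real.sqrt_zero] at this
      exact this
    have h2 := (ENNReal.continuous_ofReal.tendsto 0).comp h1
    rw [ENNReal.ofReal_zero] at h2
    exact h2
  have hpart2 : Tendsto (fun N => eLpNorm (fun ω => F N ω - S ω) 2 P) atTop (𝓝 0) :=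
    tendsto_of_tendsto_of_tendsto_of_le_of_le tendsto_const_nhds h_upper_tend
      (fun N => zero_le) hbnd
  -- Part 3
  have hS_meas : AEMeasurable S P :=
    aemeasurable_of_tendsto_metrizable_ae' (fun N => (hF_meas N).aemeasurable) h_tend_ae
  have h_lint_S : ∫⁻ ω, ENNReal.ofReal (S ω ^ 2) ∂P ≤ ENNReal.ofReal B := by
    have hle : ∫⁻ ω, ENNReal.ofReal (S ω ^ 2) ∂P
        ≤ atTop.liminf fun N => ∫⁻ ω, ENNReal.ofReal (F N ω ^ 2) ∂P := by
      have hcong : ∫⁻ ω, ENNReal.ofReal (S ω ^ 2) ∂P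
          = ∫⁻ ω, atTop.liminf (fun N => ENNReal.ofReal (F N ω ^ 2)) ∂P := by
        refine lintegral_congr_ae ?_
        filter_upwards [h_tend_ae] with ω hω
        have h1 : Tendsto (fun N => ENNReal.ofReal (F N ω ^ 2)) atTop
            (𝓝 (ENNReal.ofReal (S ω ^ 2))) := by
          refine (ENNReal.continuous_ofReal.tendsto _).comp ?_
          exact (continuous_pow 2).continuousAt.tendsto.comp hω
        exact h1.liminf_eq.symm
      rw [hcong]
      exact lintegral_liminf_le fun N =>
        ENNReal.measurable_ofReal.comp ((hF_meas N).pow_const 2)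
    refine hle.trans ?_
    refine Filter.liminf_le_of_frequently_le' ?_
    refine Filter.Eventually.frequently (Eventually.of_forall fun N => ?_)
    have h2 : (fun ω => (F N ω) ^ 2) = fun ω => (∑ i ∈ Finset.range N, v i ω) ^ 2 := rfl
    rw [my_lint_sq P (h_int_sum2 (Finset.range N))]
    refine ENNReal.ofReal_le_ofReal ?_
    exact (hkey (Finset.range N)).trans (h_range_le N)
  have hB_nonneg : 0 ≤ B := tsum_nonneg hb0
  have hS2_int : Integrable (fun ω => S ω ^ 2) P := by
    constructor
    · exact (hS_meas.pow_const 2).aestronglyMeasurable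
    · rw [hasFiniteIntegral_iff_norm]
      have : ∀ ω, ENNReal.ofReal ‖S ω ^ 2‖ = ENNReal.ofReal (S ω ^ 2) := by
        intro ω
        rw [Real.norm_eq_abs, abs_of_nonneg (sq_nonneg _)]
      simp only [this]
      exact lt_of_le_of_lt h_lint_S ENNReal.ofReal_lt_top
  have hpart3 : ∫ ω, S ω ^ 2 ∂P ≤ 5 * B := by
    have h1 : ∫ ω, S ω ^ 2 ∂P = (∫⁻ ω, ENNReal.ofReal (S ω ^ 2) ∂P).toReal :=
      integral_eq_lintegral_of_nonneg_ae (ae_of_all _ fun ω => sq_nonneg _)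
        (hS_meas.pow_const 2).aestronglyMeasurable
    rw [h1]
    have h2 : (∫⁻ ω, ENNReal.ofReal (S ω ^ 2) ∂P).toReal ≤ (ENNReal.ofReal B).toReal :=
      ENNReal.toReal_mono ENNReal.ofReal_ne_top h_lint_S
    rw [ENNReal.toReal_ofReal hB_nonneg] at h2
    linarith
  exact ⟨h_ae_sum, hpart2, hpart3⟩
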